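/- If w ∈ S_n has a reduced word s_{i_1}⋯s_{i_r} with all indices i_1,...,i_r pairwise distinct, then the Kazhdan–Lusztig polynomial P_{x,w} equals 1 for all x ≤ w in Bruhat order. -/

import Mathlib

open Polynomial

/-- The simple transposition `s_i = (i, i+1)` (1-based) in `S_n`, acting on `Fin n`
(0-based positions `i-1` and `i`); equals `1` if `i` is out of range. -/
def gen (n : ℕ) (i : ℕ) : Equiv.Perm (Fin n) :=
  if h : 1 ≤ i ∧ i < n then Equiv.swap ⟨i - 1, by omega⟩ ⟨i, h.2⟩ else 1

/-- Product of the word `l` of generator indices. -/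
def wordProd (n : ℕ) (l : List ℕ) : Equiv.Perm (Fin n) :=
  (l.map (gen n)).prod

/-- Coxeter length of `w ∈ S_n`. -/
noncomputable def len (n : ℕ) (w : Equiv.Perm (Fin n)) : ℕ :=
  sInf {r | ∃ l : List ℕ, (∀ i ∈ l, 1 ≤ i ∧ i < n) ∧ wordProd n l = w ∧ l.length = r}

/-- `l` is a reduced word for `w`. -/
def IsReducedWord (n : ℕ) (w : Equiv.Perm (Fin n)) (l : List ℕ) : Prop :=
  (∀ i ∈ l, 1 ≤ i ∧ i < n) ∧ wordProd n l = w ∧ l.length = len n w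

/-- Bruhat-Chevalley order: `x ≤ w` iff every reduced word for `w` contains a
subword whose product is `x`. -/
def Bruhat (n : ℕ) (x w : Equiv.Perm (Fin n)) : Prop :=
  ∀ l, IsReducedWord n w l → ∃ t, t.Sublist l ∧ wordProd n t = x

/-- `w` is 321-avoiding: no `i < j < k` with `w i > w j > w k`. -/
def Avoids321 (n : ℕ) (w : Equiv.Perm (Fin n)) : Prop :=
  ¬ ∃ i j k : Fin n, i < j ∧ j < k ∧ w j < w i ∧ w k < w j

/-- Product of the subword of `l` selected by the mask `S` (set of selected positions). -/
def maskProd (n : ℕ) (l : List ℕ) (S : Finset ℕ) : Equiv.Perm (Fin n) :=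
  wordProd n (((List.range l.length).filter (fun j => decide (j ∈ S))).map (fun j => l.getD j 0))

/-- Position `j` of the word `l` is a defect of the mask `S`. -/
noncomputable def IsDefect (n : ℕ) (l : List ℕ) (S : Finset ℕ) (j : ℕ) : Prop :=
  len n (maskProd n (l.take j) S * gen n (l.getD j 0)) < len n (maskProd n (l.take j) S)

/-- The defect set `D(σ)` of the mask `S` on the word `l`. -/
noncomputable def defectSet (n : ℕ) (l : List ℕ) (S : Finset ℕ) : Finset ℕ :=
  (Finset.range l.length).filter (fun j =>
    len n (maskProd n (l.take j) S * gen n (l.getD j 0)) < len n (maskProd n (l.take j) S))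

/-- Deodhar's defect generating polynomial `P_x(a) = Σ_{σ : π(w^σ) = x} q^{|D(σ)|}`. -/
noncomputable def defPoly (n : ℕ) (l : List ℕ) (x : Equiv.Perm (Fin n)) : Polynomial ℤ :=
  ∑ S ∈ (Finset.range l.length).powerset,
    if maskProd n l S = x then (X : Polynomial ℤ) ^ (defectSet n l S).card else 0

namespace KLAux

/-- valid letters -/
def Valid (n : ℕ) (l : List ℕ) : Prop := ∀ i ∈ l, 1 ≤ i ∧ i < n

theorem Valid.sublist {n : ℕ} {t l : List ℕ} (h : Valid n l) (ht : t.Sublist l) :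
    Valid n t := fun i hi => h i (ht.mem hi)

@[simp] theorem wordProd_nil (n : ℕ) : wordProd n [] = 1 := rfl

theorem wordProd_cons (n : ℕ) (a : ℕ) (l : List ℕ) :
    wordProd n (a :: l) = gen n a * wordProd n l := by
  simp [wordProd]

theorem wordProd_append (n : ℕ) (l₁ l₂ : List ℕ) :
    wordProd n (l₁ ++ l₂) = wordProd n l₁ * wordProd n l₂ := by
  simp [wordProd]

theorem wordProd_concat (n : ℕ) (l : List ℕ) (a : ℕ) :
    wordProd n (l ++ [a]) = wordProd n l * gen n a := by
  simp [wordProd_append, wordProd_cons, wordProd_nil]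

theorem gen_mul_self (n i : ℕ) : gen n i * gen n i = 1 := by
  unfold gen
  split
  · exact Equiv.swap_mul_self _ _
  · simp

theorem gen_apply_low (n i : ℕ) (h1 : 1 ≤ i) (h2 : i < n) :
    gen n i ⟨i - 1, by omega⟩ = ⟨i, h2⟩ := by
  simp [gen, h1, h2]

/-- `p` preserves the wall below `i`. -/
def Pres (n i : ℕ) (p : Equiv.Perm (Fin n)) : Prop :=
  ∀ x : Fin n, (p x).val < i ↔ x.val < i

theorem Pres.one (n i : ℕ) : Pres n i 1 := fun _ => Iff.rfl

theorem Pres.mul {n i : ℕ} {p q : Equiv.Perm (Fin n)} (hp : Pres n i p) (hq : Pres n i q) :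
    Pres n i (p * q) := fun x => (hp (q x)).trans (hq x)

theorem Pres.symm {n i : ℕ} {p : Equiv.Perm (Fin n)} (hp : Pres n i p) :
    Pres n i p.symm := by
  intro x
  have := hp (p.symm x)
  simpa using this.symm

theorem pres_gen {n i j : ℕ} (hij : j ≠ i) : Pres n i (gen n j) := by
  unfold gen
  split
  · rename_i h
    intro x
    rcases eq_or_ne x ⟨j - 1, by omega⟩ with rfl | hx1
    · rw [Equiv.swap_apply_left]; simp; omega
    · rcases eq_or_ne x ⟨j, h.2⟩ with rfl | hx2
      · rw [Equiv.swap_apply_right]; simp; omega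
      · rw [Equiv.swap_apply_of_ne_of_ne hx1 hx2]
  · exact fun _ => Iff.rfl

theorem pres_word {n i : ℕ} {l : List ℕ} (h : ∀ j ∈ l, j ≠ i) : Pres n i (wordProd n l) := by
  induction l with
  | nil => exact Pres.one n i
  | cons a l ih =>
    rw [wordProd_cons]
    exact (pres_gen (h a List.mem_cons_self)).mul
      (ih fun j hj => h j (List.mem_cons_of_mem _ hj))

theorem not_pres_split {n i : ℕ} {a b : List ℕ} (h1 : 1 ≤ i) (h2 : i < n)
    (ha : ∀ j ∈ a, j ≠ i) (hb : ∀ j ∈ b, j ≠ i) :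
    ¬ Pres n i (wordProd n (a ++ i :: b)) := by
  intro hp
  have hA : Pres n i (wordProd n a) := pres_word ha
  have hB : Pres n i (wordProd n b) := pres_word hb
  set x : Fin n := (wordProd n b).symm ⟨i - 1, by omega⟩ with hx
  have hxlt : x.val < i := by
    have := hB.symm ⟨i - 1, by omega⟩
    simp only [← hx] at this
    rw [this]; omega
  have hcalc : wordProd n (a ++ i :: b) x = wordProd n a ⟨i, h2⟩ := by
    rw [wordProd_append, wordProd_cons]
    simp only [Equiv.Perm.mul_apply, hx, Equiv.apply_symm_apply]
    rw [gen_apply_low n i h1 h2]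
  have := hp x
  rw [hcalc] at this
  have h3 := hA ⟨i, h2⟩
  simp only [show ¬ (i < i) by omega, iff_false] at h3
  omega

/-- letter membership is determined by the product, for nodup valid words. -/
theorem mem_iff_not_pres {n : ℕ} {t : List ℕ} (hnd : t.Nodup) (hv : Valid n t) (i : ℕ) :
    i ∈ t ↔ ¬ Pres n i (wordProd n t) := by
  constructor
  · intro hi
    obtain ⟨s, u, rfl⟩ := List.append_of_mem hi
    rw [List.nodup_middle, List.nodup_cons, List.mem_append] at hnd
    have hvi := hv i (by simp)
    exact not_pres_split hvi.1 hvi.2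
      (fun j hj hji => hnd.1 (hji ▸ Or.inl hj))
      (fun j hj hji => hnd.1 (hji ▸ Or.inr hj))
  · intro h
    by_contra hi
    exact h (pres_word fun j hj hji => hi (hji ▸ hj))

theorem sameLetters {n : ℕ} {t u : List ℕ} (hndt : t.Nodup) (hvt : Valid n t)
    (hndu : u.Nodup) (hvu : Valid n u) (h : wordProd n t = wordProd n u) :
    ∀ i, i ∈ t ↔ i ∈ u := by
  intro i
  rw [mem_iff_not_pres hndt hvt, mem_iff_not_pres hndu hvu, h]

end KLAux

namespace KLAux

theorem subset_of_prod_eq {n : ℕ} {t l' : List ℕ} (hnd : t.Nodup) (hv : Valid n t)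
    (hv' : Valid n l') (h : wordProd n l' = wordProd n t) : ∀ i ∈ t, i ∈ l' := by
  intro i hi
  by_contra hmem
  have hpres : Pres n i (wordProd n l') := pres_word fun j hj hji => hmem (hji ▸ hj)
  rw [h] at hpres
  exact ((mem_iff_not_pres hnd hv i).1 hi) hpres

theorem nodup_length_le {t l' : List ℕ} (hnd : t.Nodup)
    (hsub : ∀ i ∈ t, i ∈ l') : t.length ≤ l'.length := by
  have h1 : t.toFinset ⊆ l'.toFinset := by
    intro i hi
    rw [List.mem_toFinset] at *
    exact hsub i hi
  calc t.length = t.toFinset.card := (List.toFinset_card_of_nodup hnd).symm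
    _ ≤ l'.toFinset.card := Finset.card_le_card h1
    _ ≤ l'.length := l'.toFinset_card_le

/-- nodup valid words are reduced -/
theorem len_eq {n : ℕ} {t : List ℕ} (hnd : t.Nodup) (hv : Valid n t) :
    len n (wordProd n t) = t.length := by
  unfold len
  apply le_antisymm
  · exact Nat.sInf_le ⟨t, hv, rfl, rfl⟩
  · refine le_csInf ?_ ?_
    · exact ⟨t.length, ⟨t, hv, rfl, rfl⟩⟩
    rintro r ⟨l', hv', hprod, rfl⟩
    exact nodup_length_le hnd (subset_of_prod_eq hnd hv hv' hprod)

theorem isReducedWord_of_nodup {n : ℕ} {t : List ℕ} (hnd : t.Nodup) (hv : Valid n t) :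
    IsReducedWord n (wordProd n t) t :=
  ⟨hv, rfl, (len_eq hnd hv).symm⟩

/-! ### pair-sublist (relative order) lemmas -/

theorem pair_total {a b : ℕ} {t : List ℕ} (ha : a ∈ t) (hb : b ∈ t) (hab : a ≠ b) :
    [a, b].Sublist t ∨ [b, a].Sublist t := by
  induction t with
  | nil => simp at ha
  | cons c t ih =>
    rcases eq_or_ne c a with rfl | hca
    · left
      refine List.cons_sublist_cons.2 ?_
      have : b ∈ t := by rcases List.mem_cons.1 hb with h | h; · omega
                         · exact h
      simpa using this
    · rcases eq_or_ne c b with rfl | hcb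
      · right
        refine List.cons_sublist_cons.2 ?_
        have : a ∈ t := by rcases List.mem_cons.1 ha with h | h
                           · exact absurd h.symm hca
                           · exact h
        simpa using this
      · have ha' : a ∈ t := by rcases List.mem_cons.1 ha with h | h
                               · exact absurd h.symm hca
                               · exact h
        have hb' : b ∈ t := by rcases List.mem_cons.1 hb with h | h
                               · exact absurd h.symm hcb
                               · exact h
        rcases ih ha' hb' with h | h
        · exact Or.inl (h.cons c)
        · exact Or.inr (h.cons c)

theorem pair_not_both {a b : ℕ} {t : List ℕ} (hnd : t.Nodup)
    (h1 : [a, b].Sublist t) (h2 : [b, a].Sublist t) : False := by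
  induction t with
  | nil => simp at h1
  | cons c t ih =>
    rw [List.nodup_cons] at hnd
    rw [List.sublist_cons_iff] at h1 h2
    rcases h1 with h1 | ⟨r1, hr1, hr1'⟩
    · rcases h2 with h2 | ⟨r2, hr2, hr2'⟩
      · exact ih hnd.2 h1 h2
      · obtain rfl : b = c := by injection hr2
        obtain rfl : r2 = [a] := by injection hr2 with _ h; exact h.symm
        exact hnd.1 (h1.subset (by simp))
    · obtain rfl : a = c := by injection hr1
      obtain rfl : r1 = [b] := by injection hr1 with _ h; exact h.symm
      rcases h2 with h2 | ⟨r2, hr2, hr2'⟩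
      · exact hnd.1 (h2.subset (by simp))
      · obtain rfl : b = a := by injection hr2
        exact hnd.1 (hr1'.subset (by simp))

theorem pair_split {a b : ℕ} {t : List ℕ} (h : [a, b].Sublist t) :
    ∃ t1 t2 t3, t = t1 ++ a :: t2 ++ b :: t3 := by
  rw [show ([a,b] : List ℕ) = a :: [b] from rfl, List.cons_sublist_iff] at h
  obtain ⟨r1, r2, rfl, ha, hb⟩ := h
  obtain ⟨s1, s2, rfl⟩ := List.append_of_mem ha
  rw [List.cons_sublist_iff] at hb
  obtain ⟨u1, u2, rfl, hbmem, -⟩ := hb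
  obtain ⟨v1, v2, rfl⟩ := List.append_of_mem hbmem
  exact ⟨s1, s2 ++ v1, v2 ++ u2, by simp⟩

theorem sublist_remove_cons {a : ℕ} {s t : List ℕ} (h : s.Sublist (a :: t)) (ha : a ∉ s) :
    s.Sublist t := by
  rcases List.sublist_cons_iff.1 h with h | ⟨r, rfl, _⟩
  · exact h
  · simp at ha

theorem sublist_remove_middle {a : ℕ} {s b c : List ℕ} (h : s.Sublist (b ++ a :: c))
    (ha : a ∉ s) : s.Sublist (b ++ c) := by
  rw [List.sublist_append_iff] at h ⊢
  obtain ⟨l1, l2, rfl, h1, h2⟩ := h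
  exact ⟨l1, l2, rfl, h1, sublist_remove_cons h2 (fun hm => ha (by simp [hm]))⟩

end KLAux

namespace KLAux

theorem gen_inv (n i : ℕ) : (gen n i)⁻¹ = gen n i := by
  rw [eq_comm, eq_inv_iff_mul_eq_one, gen_mul_self]

theorem Pres.inv {n i : ℕ} {p : Equiv.Perm (Fin n)} (hp : Pres n i p) :
    Pres n i p⁻¹ := by
  intro x
  have := hp (p⁻¹ x)
  simpa using this.symm

theorem pres_fixes {n j : ℕ} {p : Equiv.Perm (Fin n)} (hpj : Pres n j p)
    (hpj1 : Pres n (j+1) p) (hj : j < n) : p ⟨j, hj⟩ = ⟨j, hj⟩ := by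
  have h1 := hpj1 ⟨j, hj⟩
  have h2 := hpj ⟨j, hj⟩
  simp only [Fin.val_mk] at h1 h2
  simp only [show (j:ℕ) < j + 1 by omega, iff_true, show ¬((j:ℕ) < j) by omega,
    iff_false, not_lt] at h1 h2
  apply Fin.ext
  simp only [Fin.val_mk]
  omega

theorem gen_apply_high (n j : ℕ) (h1 : 1 ≤ j) (h2 : j < n) :
    gen n j ⟨j, h2⟩ = ⟨j - 1, by omega⟩ := by
  simp [gen, h1, h2]

theorem gen_apply_ne {n i : ℕ} (x : Fin n) (h1 : x.val ≠ i - 1) (h2 : x.val ≠ i) :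
    gen n i x = x := by
  unfold gen
  split
  · exact Equiv.swap_apply_of_ne_of_ne (fun h => h1 (by rw [h])) (fun h => h2 (by rw [h]))
  · rfl

theorem ord_decomp_lt {n j : ℕ} {A B C : List ℕ} (hj1 : 1 ≤ j) (hj2 : j + 1 < n)
    (hA : ∀ k ∈ A, k ≠ j ∧ k ≠ j + 1) (hB : ∀ k ∈ B, k ≠ j ∧ k ≠ j + 1)
    (hC : ∀ k ∈ C, k ≠ j ∧ k ≠ j + 1) :
    (((wordProd n (A ++ j :: B ++ (j+1) :: C))⁻¹) ⟨j, by omega⟩).val < j + 1 := by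
  have hAj : Pres n j (wordProd n A) := pres_word (fun k hk => (hA k hk).1)
  have hAj1 : Pres n (j+1) (wordProd n A) := pres_word (fun k hk => (hA k hk).2)
  have hBj : Pres n j (wordProd n B) := pres_word (fun k hk => (hB k hk).1)
  have hCj : Pres n j (wordProd n C) := pres_word (fun k hk => (hC k hk).1)
  have hprod : wordProd n (A ++ j :: B ++ (j+1) :: C)
      = wordProd n A * (gen n j * (wordProd n B * (gen n (j+1) * wordProd n C))) := by
    rw [wordProd_append, wordProd_cons, wordProd_append, wordProd_cons]
    simp [mul_assoc]
  rw [hprod]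
  simp only [mul_inv_rev, gen_inv, Equiv.Perm.mul_apply]
  rw [pres_fixes hAj.inv hAj1.inv (by omega)]
  rw [gen_apply_high n j hj1 (by omega)]
  set z := (wordProd n B)⁻¹ ⟨j - 1, by omega⟩ with hz
  have hzval : z.val < j := by
    have := hBj.inv ⟨j - 1, by omega⟩
    rw [← hz] at this
    rw [this]; simp only [Fin.val_mk]; omega
  rw [gen_apply_ne z (by omega) (by omega)]
  have h6 := (hCj.inv z).mpr hzval
  omega

theorem ord_decomp_ge {n j : ℕ} {A B C : List ℕ} (hj1 : 1 ≤ j) (hj2 : j + 1 < n)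
    (hA : ∀ k ∈ A, k ≠ j ∧ k ≠ j + 1) (hB : ∀ k ∈ B, k ≠ j ∧ k ≠ j + 1)
    (hC : ∀ k ∈ C, k ≠ j ∧ k ≠ j + 1) :
    j + 1 ≤ (((wordProd n (A ++ (j+1) :: B ++ j :: C))⁻¹) ⟨j, by omega⟩).val := by
  have hAj : Pres n j (wordProd n A) := pres_word (fun k hk => (hA k hk).1)
  have hAj1 : Pres n (j+1) (wordProd n A) := pres_word (fun k hk => (hA k hk).2)
  have hBj1 : Pres n (j+1) (wordProd n B) := pres_word (fun k hk => (hB k hk).2)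
  have hCj1 : Pres n (j+1) (wordProd n C) := pres_word (fun k hk => (hC k hk).2)
  have hprod : wordProd n (A ++ (j+1) :: B ++ j :: C)
      = wordProd n A * (gen n (j+1) * (wordProd n B * (gen n j * wordProd n C))) := by
    rw [wordProd_append, wordProd_cons, wordProd_append, wordProd_cons]
    simp [mul_assoc]
  rw [hprod]
  simp only [mul_inv_rev, gen_inv, Equiv.Perm.mul_apply]
  rw [pres_fixes hAj.inv hAj1.inv (by omega)]
  have hgj1 : gen n (j+1) ⟨j, by omega⟩ = ⟨j + 1, hj2⟩ := by
    have := gen_apply_low n (j+1) (by omega) hj2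
    simpa using this
  rw [hgj1]
  set z := (wordProd n B)⁻¹ ⟨j + 1, hj2⟩ with hz
  have hzval : ¬ (z.val < j + 1) := by
    have := hBj1.inv ⟨j + 1, hj2⟩
    rw [← hz] at this
    rw [this]; simp only [Fin.val_mk]; omega
  rw [gen_apply_ne z (by omega) (by omega)]
  have h6 : ¬ (((wordProd n C)⁻¹ z).val < j + 1) := fun h => hzval ((hCj1.inv z).mp h)
  omega

end KLAux

namespace KLAux

theorem avoid_of_nodup_decomp {a b : ℕ} {t1 t2 t3 : List ℕ}
    (hnd : (t1 ++ a :: t2 ++ b :: t3).Nodup) :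
    (∀ k ∈ t1, k ≠ a ∧ k ≠ b) ∧ (∀ k ∈ t2, k ≠ a ∧ k ≠ b) ∧
      (∀ k ∈ t3, k ≠ a ∧ k ≠ b) := by
  refine ⟨fun k hk => ⟨?_, ?_⟩, fun k hk => ⟨?_, ?_⟩, fun k hk => ⟨?_, ?_⟩⟩ <;>
    rintro rfl <;>
  · have hc := List.nodup_iff_count_le_one.mp hnd k
    have hp := List.count_pos_iff.mpr hk
    simp [List.count_append, List.count_cons] at hc
    omega

theorem order_transfer {n : ℕ} {l l' : List ℕ} (hnd : l.Nodup) (hv : Valid n l)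
    (hnd' : l'.Nodup) (hv' : Valid n l') (hp : wordProd n l = wordProd n l')
    {j : ℕ} (hjmem : j ∈ l) (hj1mem : j + 1 ∈ l) (h : [j, j+1].Sublist l) :
    [j, j+1].Sublist l' := by
  have hlet := sameLetters hnd hv hnd' hv' hp
  have hj' : j ∈ l' := (hlet j).1 hjmem
  have hj1' : j + 1 ∈ l' := (hlet (j+1)).1 hj1mem
  have hjv := hv j hjmem
  have hj1v := hv (j+1) hj1mem
  rcases pair_total hj' hj1' (by omega) with h' | h'
  · exact h'
  exfalso
  obtain ⟨t1, t2, t3, hdec⟩ := pair_split h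
  obtain ⟨s1, s2, s3, hdec'⟩ := pair_split h'
  subst hdec hdec'
  obtain ⟨ha1, ha2, ha3⟩ := avoid_of_nodup_decomp hnd
  obtain ⟨hb1, hb2, hb3⟩ := avoid_of_nodup_decomp hnd'
  have hlt := ord_decomp_lt (n := n) hjv.1 hj1v.2 ha1 ha2 ha3
  have hge := ord_decomp_ge (n := n) hjv.1 hj1v.2
    (fun k hk => ⟨(hb1 k hk).2, (hb1 k hk).1⟩)
    (fun k hk => ⟨(hb2 k hk).2, (hb2 k hk).1⟩)
    (fun k hk => ⟨(hb3 k hk).2, (hb3 k hk).1⟩)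
  rw [hp] at hlt
  omega

end KLAux

namespace KLAux

theorem gen_comm {n a b : ℕ} (h : a + 1 < b ∨ b + 1 < a) :
    gen n a * gen n b = gen n b * gen n a := by
  unfold gen
  split
  · split
    · rename_i ha hb
      have hd : Equiv.Perm.Disjoint (Equiv.swap (⟨a-1, by omega⟩ : Fin n) ⟨a, ha.2⟩)
          (Equiv.swap (⟨b-1, by omega⟩ : Fin n) ⟨b, hb.2⟩) := by
        intro x
        by_cases hx : x.val = a - 1 ∨ x.val = a
        · right
          exact Equiv.swap_apply_of_ne_of_ne
            (fun hh => by have := congrArg Fin.val hh; simp at this; omega)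
            (fun hh => by have := congrArg Fin.val hh; simp at this; omega)
        · left
          push_neg at hx
          exact Equiv.swap_apply_of_ne_of_ne
            (fun hh => by have := congrArg Fin.val hh; simp at this; omega)
            (fun hh => by have := congrArg Fin.val hh; simp at this; omega)
      exact hd.commute.eq
    · simp
  · simp

/-- commute a letter past a list of non-adjacent letters -/
theorem gen_comm_list {n a : ℕ} {b : List ℕ}
    (hb : ∀ x ∈ b, x + 1 < a ∨ a + 1 < x) :
    wordProd n b * gen n a = gen n a * wordProd n b := by
  induction b with
  | nil => simp
  | cons c b ih =>
    rw [wordProd_cons, mul_assoc, ih (fun x hx => hb x (List.mem_cons_of_mem _ hx)),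
      ← mul_assoc, gen_comm (hb c (by simp)),
      mul_assoc]

end KLAux

namespace KLAux

theorem pair_sublist_of_split {x a : ℕ} {b1 b2 c : List ℕ} :
    [x, a].Sublist ((b1 ++ x :: b2) ++ a :: c) := by
  have h1 : [x].Sublist (b1 ++ x :: b2) := by
    simp [List.singleton_sublist]
  have h2 : [a].Sublist (a :: c) := by
    simp [List.singleton_sublist]
  simpa using h1.append h2

theorem comm_prod {n : ℕ} (t : List ℕ) : ∀ (t' : List ℕ), t.Nodup → t'.Nodup →
    Valid n t → Valid n t' → (∀ a, a ∈ t ↔ a ∈ t') →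
    (∀ j, j ∈ t → j + 1 ∈ t → ([j, j+1].Sublist t ↔ [j, j+1].Sublist t')) →
    wordProd n t = wordProd n t' := by
  induction t with
  | nil =>
    intro t' _ _ _ _ hmem _
    have : t' = [] := List.eq_nil_iff_forall_not_mem.2 (fun a ha => by
      have := (hmem a).2 ha; simp at this)
    rw [this]
  | cons a r ih =>
    intro t' hnd hnd' hv hv' hmem hord
    have hat' : a ∈ t' := (hmem a).1 (by simp)
    obtain ⟨b, c, rfl⟩ := List.append_of_mem hat'
    have hndb : a ∉ b ∧ a ∉ c := by
      rw [List.nodup_middle, List.nodup_cons, List.mem_append] at hnd'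
      exact ⟨fun h => hnd'.1 (Or.inl h), fun h => hnd'.1 (Or.inr h)⟩
    rw [List.nodup_cons] at hnd
    have hanr : a ∉ r := hnd.1
    have hcomm : ∀ x ∈ b, x + 1 < a ∨ a + 1 < x := by
      intro x hxb
      have hxt' : x ∈ b ++ a :: c := by simp [hxb]
      have hxa : x ≠ a := fun h => hndb.1 (h ▸ hxb)
      have hxr : x ∈ r := by
        have := (hmem x).2 hxt'
        simpa [hxa] using this
      by_contra hcon
      push_neg at hcon
      have : x = a + 1 ∨ x + 1 = a := by omega
      rcases this with rfl | hxa1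
      · -- x = a+1 : [a, a+1] <+ t but [a+1, a] <+ t'
        have h1 : [a, a+1].Sublist (a :: r) :=
          List.cons_sublist_cons.2 (List.singleton_sublist.2 hxr)
        have h2 := (hord a (by simp) (by simp [hxr])).1 h1
        obtain ⟨b1, b2, rfl⟩ := List.append_of_mem hxb
        exact pair_not_both hnd' pair_sublist_of_split h2
      · -- x+1 = a : [x, a] <+ t' so [x, a] <+ t, but [a, x] <+ t
        subst hxa1
        obtain ⟨b1, b2, rfl⟩ := List.append_of_mem hxb
        have h2 : [x, x+1].Sublist ((b1 ++ x :: b2) ++ (x+1) :: c) :=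
          pair_sublist_of_split
        have h1 := (hord x (by simp [hxr]) (by simp)).2 h2
        have h3 : [x+1, x].Sublist ((x+1) :: r) :=
          List.cons_sublist_cons.2 (List.singleton_sublist.2 hxr)
        exact pair_not_both (List.nodup_cons.2 hnd) h1 h3
    -- peel off a
    have hsplit : wordProd n (b ++ a :: c) = gen n a * wordProd n (b ++ c) := by
      rw [wordProd_append, wordProd_cons, wordProd_append, ← mul_assoc,
        gen_comm_list hcomm, mul_assoc]
    rw [wordProd_cons, hsplit]
    congr 1
    have hbc_sub : (b ++ c).Sublist (b ++ a :: c) :=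
      List.Sublist.append (List.Sublist.refl b) (List.sublist_cons_self a c)
    apply ih
    · exact hnd.2
    · exact hbc_sub.nodup hnd'
    · exact fun i hi => hv i (by simp [hi])
    · exact fun i hi => hv' i (hbc_sub.mem hi)
    · intro x
      constructor
      · intro hxr
        have hxa : x ≠ a := fun h => hanr (h ▸ hxr)
        have := (hmem x).1 (by simp [hxr])
        rcases List.mem_append.1 this with h | h
        · exact List.mem_append.2 (Or.inl h)
        · rcases List.mem_cons.1 h with h | h
          · exact absurd h hxa
          · exact List.mem_append.2 (Or.inr h)
      · intro hxbc
        have hxa : x ≠ a := fun h => by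
          rcases List.mem_append.1 hxbc with hh | hh
          · exact hndb.1 (h ▸ hh)
          · exact hndb.2 (h ▸ hh)
        have hxt' : x ∈ b ++ a :: c := by
          rcases List.mem_append.1 hxbc with hh | hh
          · simp [hh]
          · simp [hh]
        have := (hmem x).2 hxt'
        simpa [hxa] using this
    · intro j hj hj1
      have hja : j ≠ a := fun h => hanr (h ▸ hj)
      have hj1a : j + 1 ≠ a := fun h => hanr (h ▸ hj1)
      have hnotin : a ∉ ([j, j+1] : List ℕ) := by
        simp
        omega
      have e1 : [j, j+1].Sublist r ↔ [j, j+1].Sublist (a :: r) :=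
        ⟨fun h => h.cons a, fun h => sublist_remove_cons h hnotin⟩
      have e2 : [j, j+1].Sublist (b ++ c) ↔ [j, j+1].Sublist (b ++ a :: c) :=
        ⟨fun h => h.trans hbc_sub, fun h => sublist_remove_middle h hnotin⟩
      rw [e1, e2]
      exact hord j (by simp [hj]) (by simp [hj1])

end KLAux

namespace KLAux

theorem filter_mem_sublist_eq {u l : List ℕ} (h : u.Sublist l) (hnd : l.Nodup) :
    l.filter (fun x => decide (x ∈ u)) = u := by
  induction h with
  | slnil => rfl
  | @cons u l a h ih =>
    rw [List.nodup_cons] at hnd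
    have hau : a ∉ u := fun hh => hnd.1 (h.mem hh)
    simp only [List.filter_cons, decide_eq_true_eq]
    rw [if_neg (by simpa using hau)]
    exact ih hnd.2
  | @cons_cons u l a h ih =>
    rw [List.nodup_cons] at hnd
    simp only [List.filter_cons]
    rw [if_pos (by simp)]
    congr 1
    have hcongr : List.filter (fun x => decide (x ∈ a :: u)) l
        = List.filter (fun x => decide (x ∈ u)) l := by
      apply List.filter_congr
      intro x hx
      have hxa : x ≠ a := fun hh => hnd.1 (hh ▸ hx)
      simp [hxa]
    rw [hcongr]
    exact ih hnd.2

theorem word_of_eq {n : ℕ} {l l₂ : List ℕ} (hnd : l.Nodup) (hv : Valid n l)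
    (hv₂ : Valid n l₂) (hp : wordProd n l₂ = wordProd n l) (hlen : l₂.length = l.length) :
    l₂.Nodup ∧ ∀ i, i ∈ l₂ ↔ i ∈ l := by
  have hsub : ∀ i ∈ l, i ∈ l₂ := subset_of_prod_eq hnd hv hv₂ hp
  have h1 : l.toFinset ⊆ l₂.toFinset := fun i hi => by
    rw [List.mem_toFinset] at *; exact hsub i hi
  have hc1 : l.toFinset.card = l.length := List.toFinset_card_of_nodup hnd
  have hc2 : l₂.toFinset.card ≤ l₂.length := l₂.toFinset_card_le
  have hc3 : l₂.toFinset.card = l₂.length := by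
    have := Finset.card_le_card h1
    omega
  have hnd₂ : l₂.Nodup := by
    rw [List.card_toFinset] at hc3
    have hded : l₂.dedup = l₂ := (List.dedup_sublist l₂).eq_of_length hc3
    rw [← List.dedup_eq_self]
    exact hded
  have heq : l₂.toFinset = l.toFinset := by
    apply (Finset.eq_of_subset_of_card_le h1 (by omega)).symm
  refine ⟨hnd₂, fun i => ?_⟩
  rw [← List.mem_toFinset, ← List.mem_toFinset (l := l), heq]

theorem prod_eq_of_sublists {n : ℕ} {l t u : List ℕ} (hnd : l.Nodup) (hv : Valid n l)
    (ht : t.Sublist l) (hu : u.Sublist l) (hmem : ∀ i, i ∈ t ↔ i ∈ u) :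
    wordProd n t = wordProd n u := by
  apply comm_prod t u (ht.nodup hnd) (hu.nodup hnd) (hv.sublist ht) (hv.sublist hu) hmem
  intro j hj hj1
  constructor
  · intro h
    rcases pair_total ((hmem j).1 hj) ((hmem (j+1)).1 hj1) (by omega) with h' | h'
    · exact h'
    · exact absurd (h'.trans hu) (fun hh => pair_not_both hnd (h.trans ht) hh)
  · intro h
    rcases pair_total hj hj1 (by omega) with h' | h'
    · exact h'
    · exact absurd (h'.trans ht) (fun hh => pair_not_both hnd hh (h.trans hu))

theorem bruhat_char {n : ℕ} {l : List ℕ} (hnd : l.Nodup) (hv : Valid n l) (y : Equiv.Perm (Fin n)) :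
    Bruhat n y (wordProd n l) ↔ ∃ t, t.Sublist l ∧ wordProd n t = y := by
  constructor
  · intro h
    exact h l (isReducedWord_of_nodup hnd hv)
  · rintro ⟨t, htl, rfl⟩ l₂ ⟨hv₂, hp₂, hlen₂⟩
    rw [len_eq hnd hv] at hlen₂
    obtain ⟨hnd₂, hmem₂⟩ := word_of_eq hnd hv hv₂ hp₂ hlen₂
    refine ⟨l₂.filter (fun x => decide (x ∈ t)), List.filter_sublist (l := l₂), ?_⟩
    set t₂ := l₂.filter (fun x => decide (x ∈ t)) with ht₂
    have ht₂sub : t₂.Sublist l₂ := List.filter_sublist (l := l₂)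
    have hmemt₂ : ∀ x, x ∈ t₂ ↔ x ∈ t := by
      intro x
      rw [ht₂, List.mem_filter]
      simp only [decide_eq_true_eq]
      constructor
      · exact fun h => h.2
      · exact fun h => ⟨(hmem₂ x).2 (htl.mem h), h⟩
    symm
    apply comm_prod t t₂ (htl.nodup hnd) (ht₂sub.nodup hnd₂) (hv.sublist htl)
      (Valid.sublist hv₂ ht₂sub) (fun a => (hmemt₂ a).symm)
    intro j hj hj1
    have hjl : j ∈ l := htl.mem hj
    have hj1l : j + 1 ∈ l := htl.mem hj1
    constructor
    · intro h
      have hll : [j, j+1].Sublist l₂ :=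
        order_transfer hnd hv hnd₂ hv₂ hp₂.symm hjl hj1l (h.trans htl)
      rcases pair_total ((hmemt₂ j).2 hj) ((hmemt₂ (j+1)).2 hj1) (by omega) with h' | h'
      · exact h'
      · exact absurd (h'.trans ht₂sub) (fun hh => pair_not_both hnd₂ hll hh)
    · intro h
      have hll : [j, j+1].Sublist l :=
        order_transfer hnd₂ hv₂ hnd hv hp₂ ((hmem₂ j).2 hjl) ((hmem₂ (j+1)).2 hj1l)
          (h.trans ht₂sub)
      rcases pair_total hj hj1 (by omega) with h' | h'
      · exact h'
      · exact absurd (h'.trans htl) (fun hh => pair_not_both hnd hll hh)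

end KLAux

namespace KLAux

theorem interval_char {n : ℕ} {l : List ℕ} (hnd : l.Nodup) (hv : Valid n l)
    {t : List ℕ} (ht : t.Sublist l) (y : Equiv.Perm (Fin n)) :
    (Bruhat n (wordProd n t) y ∧ Bruhat n y (wordProd n l)) ↔
      ∃ u, u.Sublist l ∧ (∀ i, i ∈ t → i ∈ u) ∧ wordProd n u = y := by
  constructor
  · rintro ⟨hxy, hyw⟩
    obtain ⟨u, hul, rfl⟩ := (bruhat_char hnd hv y).1 hyw
    obtain ⟨v, hvu, hveq⟩ := (bruhat_char (hul.nodup hnd) (hv.sublist hul) _).1 hxy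
    refine ⟨u, hul, fun i hi => ?_, rfl⟩
    have hsl := sameLetters ((hvu.trans hul).nodup hnd) (hv.sublist (hvu.trans hul))
      (ht.nodup hnd) (hv.sublist ht) hveq
    exact hvu.mem ((hsl i).2 hi)
  · rintro ⟨u, hul, hsub, rfl⟩
    constructor
    · rw [bruhat_char (hul.nodup hnd) (hv.sublist hul)]
      refine ⟨u.filter (fun x => decide (x ∈ t)), List.filter_sublist (l := u), ?_⟩
      apply prod_eq_of_sublists hnd hv ((List.filter_sublist (l := u)).trans hul) ht
      intro i
      rw [List.mem_filter]
      simp only [decide_eq_true_eq]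
      exact ⟨fun h => h.2, fun h => ⟨hsub i h, h⟩⟩
    · rw [bruhat_char hnd hv]
      exact ⟨u, hul, rfl⟩

theorem R_val {n : ℕ} (R : Equiv.Perm (Fin n) → Equiv.Perm (Fin n) → Polynomial ℤ)
    (hR0 : ∀ x w : Equiv.Perm (Fin n), ¬ Bruhat n x w → R x w = 0)
    (hR1 : ∀ w : Equiv.Perm (Fin n), R w w = 1)
    (hRrec : ∀ (x w : Equiv.Perm (Fin n)) (i : ℕ), 1 ≤ i → i < n →
      len n (w * gen n i) < len n w →
        (len n (x * gen n i) < len n x →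
          R x w = R (x * gen n i) (w * gen n i)) ∧
        (len n x < len n (x * gen n i) →
          R x w = X * R (x * gen n i) (w * gen n i) + (X - 1) * R x (w * gen n i)))
    {l : List ℕ} (hnd : l.Nodup) (hv : Valid n l) :
    ∀ m (u t : List ℕ), u.length ≤ m → u.Sublist l → t.Sublist l → (∀ i ∈ t, i ∈ u) →
      R (wordProd n t) (wordProd n u) = (X - 1) ^ (u.length - t.length) := by
  intro m
  induction m with
  | zero =>
    intro u t hm hul htl hsub
    -- u = [], so t = []
    have hu0 : u = [] := List.length_eq_zero_iff.mp (Nat.le_zero.mp hm)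
    subst hu0
    have ht0 : t = [] := List.eq_nil_iff_forall_not_mem.2 (fun a ha => by
      have := hsub a ha; simp at this)
    subst ht0
    simp [hR1]
  | succ m ih =>
    intro u t hm hul htl hsub
    have hndu : u.Nodup := hul.nodup hnd
    have hndt : t.Nodup := htl.nodup hnd
    have hlen_le : t.length ≤ u.length := nodup_length_le hndt hsub
    rcases eq_or_lt_of_le hlen_le with heq | hlt
    · -- equal lengths: same sets, same element
      have hmem : ∀ i, i ∈ t ↔ i ∈ u := by
        have h1 : t.toFinset ⊆ u.toFinset := fun i hi => by
          rw [List.mem_toFinset] at *; exact hsub i hi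
        have h2 : t.toFinset = u.toFinset := by
          apply Finset.eq_of_subset_of_card_le h1
          rw [List.toFinset_card_of_nodup hndt, List.toFinset_card_of_nodup hndu, heq]
        intro i
        rw [← List.mem_toFinset, ← List.mem_toFinset (l := u), h2]
      rw [prod_eq_of_sublists hnd hv htl hul hmem, heq]
      simp [hR1]
    · -- u nonempty
      have hune : u ≠ [] := by
        intro h; subst h; simp at hlt
      set i := u.getLast hune with hi
      have hudec : u.dropLast ++ [i] = u := List.dropLast_append_getLast hune
      set u' := u.dropLast with hu'
      have hu'sub : u'.Sublist l := (List.dropLast_sublist u).trans hul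
      have hndu' : u'.Nodup := (List.dropLast_sublist u).nodup hndu
      have hinotu' : i ∉ u' := by
        have := hudec ▸ hndu
        rw [List.nodup_append] at this
        exact fun h => this.2.2 i h i (by simp) rfl
      have hiv : 1 ≤ i ∧ i < n := hv i (hul.mem (u.getLast_mem hune))
      have hy_desc : wordProd n u * gen n i = wordProd n u' := by
        conv_lhs => rw [← hudec]
        rw [wordProd_concat, mul_assoc, gen_mul_self, mul_one]
      have hlenu : len n (wordProd n u) = u.length := len_eq hndu (hv.sublist hul)
      have hlenu' : len n (wordProd n u') = u'.length := len_eq hndu' (hv.sublist hu'sub)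
      have hu'len : u'.length = u.length - 1 := by
        rw [hu', List.length_dropLast]
      have hdesc : len n (wordProd n u * gen n i) < len n (wordProd n u) := by
        rw [hy_desc, hlenu, hlenu', hu'len]; omega
      have hrec := hRrec (wordProd n t) (wordProd n u) i hiv.1 hiv.2 hdesc
      by_cases hit : i ∈ t
      · -- i is the last letter of t as well
        obtain ⟨s1, s2, hts⟩ := List.append_of_mem hit
        have hs2 : s2 = [] := by
          rcases s2 with _ | ⟨k, s2'⟩
          · rfl
          exfalso
          have hk_t : k ∈ t := by rw [hts]; simp
          have hk_ne : k ≠ i := by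
            have := hts ▸ hndt
            rw [List.nodup_middle, List.nodup_cons] at this
            exact fun h => this.1 (h ▸ by simp)
          have h1 : [i, k].Sublist t := by
            rw [hts]
            refine List.Sublist.trans ?_ (List.sublist_append_right s1 _)
            exact List.cons_sublist_cons.2 (List.singleton_sublist.2 (by simp))
          have h2 : [k, i].Sublist u := by
            rw [← hudec]
            have hk_u' : k ∈ u' := by
              have : k ∈ u := hsub k hk_t
              rw [← hudec] at this
              rcases List.mem_append.1 this with h | h
              · exact h
              · simp at h; exact absurd h hk_ne
            simpa using (List.singleton_sublist.2 hk_u').append (List.Sublist.refl [i])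
          exact pair_not_both hnd (h1.trans htl) (h2.trans hul)
        subst hs2
        have hts' : t = s1 ++ [i] := by simpa using hts
        have hxdesc : wordProd n t * gen n i = wordProd n s1 := by
          rw [hts', wordProd_concat, mul_assoc, gen_mul_self, mul_one]
        have hs1sub : s1.Sublist l := ((List.sublist_append_left s1 [i]).trans (hts' ▸ htl))
        have hnds1 : s1.Nodup := hs1sub.nodup hnd
        have hlent : len n (wordProd n t) = t.length := len_eq hndt (hv.sublist htl)
        have hlens1 : len n (wordProd n s1) = s1.length := len_eq hnds1 (hv.sublist hs1sub)
        have hs1len : s1.length = t.length - 1 := by rw [hts']; simp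
        have htpos : 1 ≤ t.length := by
          rw [hts']; simp
        have hxlt : len n (wordProd n t * gen n i) < len n (wordProd n t) := by
          rw [hxdesc, hlent, hlens1]; omega
        rw [hrec.1 hxlt, hxdesc, hy_desc]
        have hsub' : ∀ k ∈ s1, k ∈ u' := by
          intro k hk
          have hk_ne : k ≠ i := by
            have := hts' ▸ hndt
            rw [List.nodup_append] at this
            exact fun h => this.2.2 k hk i (by simp) h
          have : k ∈ u := hsub k (by rw [hts']; simp [hk])
          rw [← hudec] at this
          rcases List.mem_append.1 this with h | h
          · exact h
          · simp at h; exact absurd h hk_ne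
        rw [ih u' s1 (by omega) hu'sub hs1sub hsub']
        congr 1
        omega
      · -- i ∉ t : ascent for x
        have htisub : ∀ k ∈ t, k ∈ u' := by
          intro k hk
          have hk_ne : k ≠ i := fun h => hit (h ▸ hk)
          have : k ∈ u := hsub k hk
          rw [← hudec] at this
          rcases List.mem_append.1 this with h | h
          · exact h
          · simp at h; exact absurd h hk_ne
        have hxasc : wordProd n t * gen n i = wordProd n (t ++ [i]) := by
          rw [wordProd_concat]
        have hndti : (t ++ [i]).Nodup := by
          rw [List.nodup_append]
          refine ⟨hndt, List.nodup_singleton i, fun a ha b hai hab => ?_⟩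
          simp only [List.mem_singleton] at hai
          subst hai; subst hab; exact hit ha
        have hvti : Valid n (t ++ [i]) := by
          intro k hk
          rcases List.mem_append.1 hk with h | h
          · exact hv k (htl.mem h)
          · simp at h; exact h ▸ hiv
        have hlent : len n (wordProd n t) = t.length := len_eq hndt (hv.sublist htl)
        have hlenti : len n (wordProd n (t ++ [i])) = t.length + 1 := by
          rw [len_eq hndti hvti]; simp
        have hxlt : len n (wordProd n t) < len n (wordProd n t * gen n i) := by
          rw [hxasc, hlent, hlenti]; omega
        rw [hrec.2 hxlt, hy_desc]
        have hzero : R (wordProd n t * gen n i) (wordProd n u') = 0 := by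
          apply hR0
          rw [hxasc, bruhat_char hndu' (hv.sublist hu'sub)]
          rintro ⟨v, hvu', hveq⟩
          have hsl := sameLetters (hvu'.nodup hndu') (hv.sublist (hvu'.trans hu'sub))
            hndti hvti hveq
          exact hinotu' (hvu'.mem ((hsl i).2 (by simp)))
        rw [hzero, ih u' t (by omega) hu'sub htl htisub]
        have hlt' : t.length ≤ u'.length := nodup_length_le hndt htisub
        rw [show u.length - t.length = (u'.length - t.length) + 1 from by omega, pow_succ]
        ring

end KLAux

namespace KLAux

theorem sum_pow_card (D : Finset ℕ) :
    ∑ F ∈ D.powerset, (X - 1 : Polynomial ℤ) ^ F.card = X ^ D.card := by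
  calc ∑ F ∈ D.powerset, (X - 1 : Polynomial ℤ) ^ F.card
      = ∑ F ∈ D.powerset, (∏ _i ∈ F, (X - 1 : Polynomial ℤ)) * ∏ _i ∈ D \ F, (1 : Polynomial ℤ) := by
        apply Finset.sum_congr rfl
        intro F hF
        rw [Finset.prod_const, Finset.prod_const, one_pow, mul_one]
    _ = ∏ _i ∈ D, ((X - 1 : Polynomial ℤ) + 1) := (Finset.prod_add _ _ D).symm
    _ = X ^ D.card := by rw [sub_add_cancel, Finset.prod_const]

end KLAux

namespace KLAux

/-- the subword of `l` with letters in `t` or `F` -/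
def filt (l t : List ℕ) (F : Finset ℕ) : List ℕ :=
  l.filter (fun a => decide (a ∈ t ∨ a ∈ F))

theorem filt_sublist (l t : List ℕ) (F : Finset ℕ) : (filt l t F).Sublist l :=
  List.filter_sublist (l := l)

theorem mem_filt {l t : List ℕ} {F : Finset ℕ} {i : ℕ} :
    i ∈ filt l t F ↔ i ∈ l ∧ (i ∈ t ∨ i ∈ F) := by
  rw [filt, List.mem_filter]
  simp

end KLAux


open scoped Classical in
/-- if `w` has a reduced word with pairwise distinct letters, then
`P_{x,w} = 1` for all `x ≤ w`.  The Kazhdan-Lusztig polynomials `P` are axiomatized via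
the R-polynomials `R` and the defining properties (support, normalization, degree bound,
and the bar-invariance functional equation `q^{ℓ(w)-ℓ(x)} P_{x,w}(q⁻¹) = Σ_y R_{x,y} P_{y,w}`). -/
theorem stmt10 (n : ℕ)
    (R P : Equiv.Perm (Fin n) → Equiv.Perm (Fin n) → Polynomial ℤ)
    (hR0 : ∀ x w : Equiv.Perm (Fin n), ¬ Bruhat n x w → R x w = 0)
    (hR1 : ∀ w : Equiv.Perm (Fin n), R w w = 1)
    (hRrec : ∀ (x w : Equiv.Perm (Fin n)) (i : ℕ), 1 ≤ i → i < n →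
      len n (w * gen n i) < len n w →
        (len n (x * gen n i) < len n x →
          R x w = R (x * gen n i) (w * gen n i)) ∧
        (len n x < len n (x * gen n i) →
          R x w = X * R (x * gen n i) (w * gen n i) + (X - 1) * R x (w * gen n i)))
    (hP0 : ∀ x w : Equiv.Perm (Fin n), ¬ Bruhat n x w → P x w = 0)
    (hP1 : ∀ w : Equiv.Perm (Fin n), P w w = 1)
    (hPdeg : ∀ x w : Equiv.Perm (Fin n), Bruhat n x w → x ≠ w →
      2 * (P x w).natDegree + 1 + len n x ≤ len n w)
    (hPbar : ∀ x w : Equiv.Perm (Fin n), Bruhat n x w →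
      (P x w).reflect (len n w - len n x) =
        ∑ y : Equiv.Perm (Fin n),
          (if Bruhat n x y ∧ Bruhat n y w then R x y * P y w else 0))
    (w : Equiv.Perm (Fin n)) (l : List ℕ) (hl : IsReducedWord n w l) (hnd : l.Nodup)
    (x : Equiv.Perm (Fin n)) (hx : Bruhat n x w) :
    P x w = 1 := by
  open KLAux in
  obtain ⟨hv, hw, hllen⟩ := hl
  subst hw
  have hv : KLAux.Valid n l := hv
  have key : ∀ d (t : List ℕ), t.Sublist l → l.length - t.length ≤ d →
      P (wordProd n t) (wordProd n l) = 1 := by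
    intro d
    induction d with
    | zero =>
      intro t ht hd
      have h1 : t.length ≤ l.length := ht.length_le
      rw [ht.eq_of_length (by omega)]
      exact hP1 _
    | succ d ihd =>
      intro t ht hd
      have hlen_le : t.length ≤ l.length := ht.length_le
      rcases eq_or_lt_of_le hlen_le with heq | hlt
      · rw [ht.eq_of_length heq]; exact hP1 _
      have hndt : t.Nodup := ht.nodup hnd
      set x := wordProd n t with hxdef
      have hBxw : Bruhat n x (wordProd n l) := (KLAux.bruhat_char hnd hv _).2 ⟨t, ht, rfl⟩
      have heqbar := hPbar x (wordProd n l) hBxw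
      have hlenw : len n (wordProd n l) = l.length := KLAux.len_eq hnd hv
      have hlenx : len n x = t.length := KLAux.len_eq hndt (hv.sublist ht)
      set T := t.toFinset with hT
      set L := l.toFinset with hL
      set D := L \ T with hD
      have hTL : T ⊆ L := fun a ha => by
        rw [hL, List.mem_toFinset]
        rw [hT, List.mem_toFinset] at ha
        exact ht.mem ha
      have hcardT : T.card = t.length := List.toFinset_card_of_nodup hndt
      have hcardL : L.card = l.length := List.toFinset_card_of_nodup hnd
      have hDcard : D.card = l.length - t.length := by
        rw [hD, Finset.card_sdiff_of_subset hTL, hcardT, hcardL]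
      -- facts about filt
      have hDfact : ∀ a ∈ D, a ∈ l ∧ a ∉ t := by
        intro a ha
        rw [hD, Finset.mem_sdiff, hL, hT, List.mem_toFinset, List.mem_toFinset] at ha
        exact ha
      have ht_sub_u : ∀ (F : Finset ℕ), ∀ i ∈ t, i ∈ filt l t F :=
        fun F i hi => mem_filt.2 ⟨ht.mem hi, Or.inl hi⟩
      have hnduF : ∀ F : Finset ℕ, (filt l t F).Nodup := fun F => (filt_sublist l t F).nodup hnd
      have hufin : ∀ F ∈ D.powerset, (filt l t F).toFinset = T ∪ F := by
        intro F hF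
        rw [Finset.mem_powerset] at hF
        ext a
        rw [List.mem_toFinset, mem_filt, Finset.mem_union, hT, List.mem_toFinset]
        constructor
        · rintro ⟨hal, h | h⟩
          · exact Or.inl h
          · exact Or.inr h
        · rintro (h | h)
          · exact ⟨ht.mem h, Or.inl h⟩
          · exact ⟨(hDfact a (hF h)).1, Or.inr h⟩
      have hdisj : ∀ F ∈ D.powerset, Disjoint T F := by
        intro F hF
        rw [Finset.mem_powerset] at hF
        rw [Finset.disjoint_right]
        intro a ha
        rw [hT, List.mem_toFinset]
        exact (hDfact a (hF ha)).2
      have hcard : ∀ F ∈ D.powerset, (filt l t F).length = t.length + F.card := by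
        intro F hF
        rw [← List.toFinset_card_of_nodup (hnduF F), hufin F hF,
          Finset.card_union_of_disjoint (hdisj F hF), hcardT]
      have hfilt_empty : filt l t ∅ = t := by
        rw [filt]
        have : List.filter (fun a => decide (a ∈ t ∨ a ∈ (∅ : Finset ℕ))) l
            = List.filter (fun a => decide (a ∈ t)) l := by
          apply List.filter_congr
          intro a ha
          simp
        rw [this]
        exact KLAux.filter_mem_sublist_eq ht hnd
      have hpsi_cond : ∀ F ∈ D.powerset,
          Bruhat n x (wordProd n (filt l t F)) ∧
            Bruhat n (wordProd n (filt l t F)) (wordProd n l) :=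
        fun F hF => (KLAux.interval_char hnd hv ht _).2 ⟨filt l t F, filt_sublist l t F, ht_sub_u F, rfl⟩
      have hRvalF : ∀ F ∈ D.powerset, R x (wordProd n (filt l t F)) = (X - 1) ^ F.card := by
        intro F hF
        rw [hxdef, KLAux.R_val R hR0 hR1 hRrec hnd hv l.length (filt l t F) t
          (filt_sublist l t F).length_le (filt_sublist l t F) ht (ht_sub_u F)]
        rw [hcard F hF]
        congr 1
        omega
      -- sum transformation
      have hsum : (∑ y : Equiv.Perm (Fin n),
          if Bruhat n x y ∧ Bruhat n y (wordProd n l) then R x y * P y (wordProd n l) else 0)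
          = ∑ F ∈ D.powerset, (X - 1) ^ F.card * P (wordProd n (filt l t F)) (wordProd n l) := by
        rw [← Finset.sum_filter]
        symm
        apply Finset.sum_bij (i := fun F _ => wordProd n (filt l t F))
        · intro F hF
          rw [Finset.mem_filter]
          exact ⟨Finset.mem_univ _, hpsi_cond F hF⟩
        · intro F₁ hF₁ F₂ hF₂ hEq
          rw [Finset.mem_powerset] at hF₁ hF₂
          have hmm := KLAux.sameLetters (hnduF F₁) (hv.sublist (filt_sublist l t F₁))
            (hnduF F₂) (hv.sublist (filt_sublist l t F₂)) hEq
          have half : ∀ (F₁ F₂ : Finset ℕ), F₁ ⊆ D → F₂ ⊆ D →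
              (∀ i, i ∈ filt l t F₁ ↔ i ∈ filt l t F₂) → F₁ ⊆ F₂ := by
            intro F₁ F₂ h₁ h₂ hiff a ha
            have haD := hDfact a (h₁ ha)
            have h3 : a ∈ filt l t F₁ := mem_filt.2 ⟨haD.1, Or.inr ha⟩
            have h4 := (hiff a).1 h3
            rcases (mem_filt.1 h4).2 with h | h
            · exact absurd h haD.2
            · exact h
          exact Finset.Subset.antisymm (half F₁ F₂ hF₁ hF₂ hmm)
            (half F₂ F₁ hF₂ hF₁ (fun i => (hmm i).symm))
        · intro y hy
          rw [Finset.mem_filter] at hy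
          obtain ⟨u, hul, hsubtu, hueq⟩ := (KLAux.interval_char hnd hv ht y).1 hy.2
          refine ⟨u.toFinset \ T, ?_, ?_⟩
          · rw [Finset.mem_powerset, hD]
            apply Finset.sdiff_subset_sdiff _ (Finset.Subset.refl T)
            intro a ha
            rw [List.mem_toFinset] at ha
            rw [hL, List.mem_toFinset]
            exact hul.mem ha
          · have hfu : filt l t (u.toFinset \ T) = u := by
              rw [filt]
              have hcg : List.filter (fun a => decide (a ∈ t ∨ a ∈ u.toFinset \ T)) l
                  = List.filter (fun a => decide (a ∈ u)) l := by
                apply List.filter_congr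
                intro a ha
                simp only [decide_eq_decide]
                constructor
                · rintro (h | h)
                  · exact hsubtu a h
                  · rw [Finset.mem_sdiff, List.mem_toFinset] at h
                    exact h.1
                · intro h
                  by_cases hat : a ∈ t
                  · exact Or.inl hat
                  · refine Or.inr ?_
                    rw [Finset.mem_sdiff, List.mem_toFinset]
                    exact ⟨h, by rw [hT, List.mem_toFinset]; exact hat⟩
              rw [hcg]
              exact KLAux.filter_mem_sublist_eq hul hnd
            rw [hfu, hueq]
        · intro F hF
          rw [hRvalF F hF]
      rw [hsum] at heqbar
      -- split off the empty set
      have hememp : (∅ : Finset ℕ) ∈ D.powerset := Finset.empty_mem_powerset D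
      rw [← Finset.add_sum_erase _ _ hememp] at heqbar
      have hterm0 : (X - 1 : Polynomial ℤ) ^ (∅ : Finset ℕ).card
          * P (wordProd n (filt l t ∅)) (wordProd n l) = P x (wordProd n l) := by
        rw [hfilt_empty, Finset.card_empty, pow_zero, one_mul, hxdef]
      have hrest : ∑ F ∈ D.powerset.erase ∅,
          (X - 1 : Polynomial ℤ) ^ F.card * P (wordProd n (filt l t F)) (wordProd n l)
          = ∑ F ∈ D.powerset.erase ∅, (X - 1 : Polynomial ℤ) ^ F.card := by
        apply Finset.sum_congr rfl
        intro F hF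
        have hFp : F ∈ D.powerset := Finset.mem_of_mem_erase hF
        have hFne : F ≠ ∅ := Finset.ne_of_mem_erase hF
        have hFcard : 1 ≤ F.card := Finset.card_pos.2 (Finset.nonempty_iff_ne_empty.2 hFne)
        have hlen2 := hcard F hFp
        have := ihd (filt l t F) (filt_sublist l t F) (by omega)
        rw [this, mul_one]
      have hbinom : (1 : Polynomial ℤ) + ∑ F ∈ D.powerset.erase ∅,
          (X - 1 : Polynomial ℤ) ^ F.card = X ^ D.card := by
        rw [← KLAux.sum_pow_card D, ← Finset.add_sum_erase _ _ hememp,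
          Finset.card_empty, pow_zero]
      rw [hterm0, hrest] at heqbar
      have heq2 : (P x (wordProd n l)).reflect (len n (wordProd n l) - len n x)
          = P x (wordProd n l) + (X ^ D.card - 1) := by
        rw [heqbar]
        have : ∑ F ∈ D.powerset.erase ∅, (X - 1 : Polynomial ℤ) ^ F.card
            = X ^ D.card - 1 := by
          rw [eq_sub_iff_add_eq, add_comm]
          exact hbinom
        rw [this]
      rw [hlenw, hlenx, hDcard] at heq2
      -- degree argument
      have hxw_ne : x ≠ wordProd n l := by
        intro hcontra
        have := congrArg (len n) hcontra
        rw [hlenx, hlenw] at this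
        omega
      have hdeg := hPdeg x (wordProd n l) hBxw hxw_ne
      rw [hlenx, hlenw] at hdeg
      ext k
      rcases le_or_gt k (P x (wordProd n l)).natDegree with hk | hk
      · have hc := congrArg (fun q => Polynomial.coeff q k) heq2
        simp only [Polynomial.coeff_reflect] at hc
        rw [Polynomial.revAt_le (by omega : k ≤ l.length - t.length)] at hc
        rw [Polynomial.coeff_eq_zero_of_natDegree_lt
          (by omega : (P x (wordProd n l)).natDegree < l.length - t.length - k)] at hc
        simp only [Polynomial.coeff_add, Polynomial.coeff_sub, Polynomial.coeff_X_pow,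
          Polynomial.coeff_one] at hc
        rw [Polynomial.coeff_one]
        split_ifs at hc ⊢ <;> omega
      · rw [Polynomial.coeff_eq_zero_of_natDegree_lt hk, Polynomial.coeff_one,
          if_neg (by omega : ¬ k = 0)]
  obtain ⟨t, ht, hxeq⟩ := (KLAux.bruhat_char hnd hv x).1 hx
  rw [← hxeq]
  exact key l.length t ht (by omega)
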